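/- For 0 < x < 1/2 and η ≥ 1, the sum Σ_{k=0}^∞ exp(2^k log x − (1+η)/2^{k+1}) is at most (13/4) · exp(−√(−2 (log x)(1+η))). -/

import Mathlib

open Real Finset

private lemma pow64_le_exp (c : ℝ) (hc : 0 ≤ c) : (1 + c / 64) ^ (64 : ℕ) ≤ Real.exp c := by
  have h1 : 1 + c / 64 ≤ Real.exp (c / 64) := by
    have := Real.add_one_le_exp (c / 64); linarith
  calc (1 + c/64) ^ (64:ℕ) ≤ (Real.exp (c/64)) ^ (64:ℕ) :=
        pow_le_pow_left₀ (by positivity) h1 64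
    _ = Real.exp c := by rw [← Real.exp_nat_mul]; congr 1; push_cast; ring

private lemma exp_neg_le_of (c p : ℝ) (hc : 0 ≤ c) (hp : 0 < p)
    (h : 1 ≤ p * (1 + c/64)^(64:ℕ)) : Real.exp (-c) ≤ p := by
  have h2 : 1 ≤ p * Real.exp c := by
    calc (1:ℝ) ≤ p * (1 + c/64)^(64:ℕ) := h
    _ ≤ p * Real.exp c := by gcongr; exact pow64_le_exp c hc
  have h3 : Real.exp (-c) * Real.exp c = 1 := by rw [← Real.exp_add]; simp
  nlinarith [Real.exp_pos c, Real.exp_pos (-c),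
    mul_le_mul_of_nonneg_left h2 (Real.exp_pos (-c)).le]

private lemma cert_geom : Real.exp (-(333/200 : ℝ)) ≤ 1/5 :=
  exp_neg_le_of _ _ (by norm_num) (by norm_num) (by norm_num)

private lemma cert_geom_pow (m : ℕ) : Real.exp (-((m:ℝ) * (333/200))) ≤ (1/5)^m := by
  have h : Real.exp (-((m:ℝ) * (333/200))) = (Real.exp (-(333/200)))^m := by
    rw [← Real.exp_nat_mul]; congr 1; ring
  rw [h]
  exact pow_le_pow_left₀ (Real.exp_pos _).le cert_geom m

set_option maxHeartbeats 1000000 in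
private lemma certA1 : Real.exp (-((1/4:ℝ) * (333/200))) ≤ 6605/10000 :=
  exp_neg_le_of _ _ (by norm_num) (by norm_num) (by norm_num)

set_option maxHeartbeats 1000000 in
private lemma certA2 : Real.exp (-((9/8:ℝ) * (333/200))) ≤ 1579/10000 :=
  exp_neg_le_of _ _ (by norm_num) (by norm_num) (by norm_num)

set_option maxHeartbeats 1000000 in
private lemma certA3 : Real.exp (-((49/16:ℝ) * (333/200))) ≤ 75/10000 :=
  exp_neg_le_of _ _ (by norm_num) (by norm_num) (by norm_num)

set_option maxHeartbeats 1000000 in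
private lemma certA4 : Real.exp (-((9/140:ℝ) * (333/200))) ≤ 8986/10000 :=
  exp_neg_le_of _ _ (by norm_num) (by norm_num) (by norm_num)

set_option maxHeartbeats 1000000 in
private lemma certA5 : Real.exp (-((169/280:ℝ) * (333/200))) ≤ 3690/10000 :=
  exp_neg_le_of _ _ (by norm_num) (by norm_num) (by norm_num)

set_option maxHeartbeats 1000000 in
private lemma certA6 : Real.exp (-((1089/560:ℝ) * (333/200))) ≤ 425/10000 :=
  exp_neg_le_of _ _ (by norm_num) (by norm_num) (by norm_num)

set_option maxHeartbeats 1000000 in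
private lemma certA7 : Real.exp (-((33/7:ℝ) * (333/200))) ≤ 61/100000 :=
  exp_neg_le_of _ _ (by norm_num) (by norm_num) (by norm_num)

set_option maxHeartbeats 1000000 in
private lemma certB1 : Real.exp (-((2/35:ℝ) * (333/200))) ≤ 9094/10000 :=
  exp_neg_le_of _ _ (by norm_num) (by norm_num) (by norm_num)

set_option maxHeartbeats 1000000 in
private lemma certB2 : Real.exp (-((81/140:ℝ) * (333/200))) ≤ 3844/10000 :=
  exp_neg_le_of _ _ (by norm_num) (by norm_num) (by norm_num)

set_option maxHeartbeats 1000000 in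
private lemma certB3 : Real.exp (-((529/280:ℝ) * (333/200))) ≤ 464/10000 :=
  exp_neg_le_of _ _ (by norm_num) (by norm_num) (by norm_num)

set_option maxHeartbeats 1000000 in
private lemma certB4 : Real.exp (-((23/5:ℝ) * (333/200))) ≤ 73/100000 :=
  exp_neg_le_of _ _ (by norm_num) (by norm_num) (by norm_num)

set_option maxHeartbeats 1000000 in
private lemma certB5 : Real.exp (-((3:ℝ) * (333/200))) ≤ 816/100000 :=
  exp_neg_le_of _ _ (by norm_num) (by norm_num) (by norm_num)

private lemma term_bound {s u c p : ℝ} (hu : 0 < u) (hs : 333/200 ≤ s) (hc : 0 ≤ c)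
    (hg : c * s * u ≤ (u - s/2)^2) (hp : Real.exp (-(c * (333/200))) ≤ p) :
    Real.exp (-(u + s^2/(4*u))) ≤ Real.exp (-s) * p := by
  have hid : -(u + s^2/(4*u)) = -s + -((u - s/2)^2/u) := by
    field_simp; ring
  rw [hid, Real.exp_add]
  have h1 : c * (333/200) ≤ (u - s/2)^2/u := by
    rw [le_div_iff₀ hu]
    nlinarith [mul_nonneg (mul_nonneg hc hu.le) (by linarith : (0:ℝ) ≤ s - 333/200)]
  have e1 : Real.exp (-((u - s/2)^2/u)) ≤ Real.exp (-(c * (333/200))) :=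
    Real.exp_le_exp.2 (by linarith)
  exact mul_le_mul_of_nonneg_left (le_trans e1 hp) (Real.exp_pos _).le

private lemma geom_partial (n : ℕ) : ∑ j ∈ range n, (1/5:ℝ)^j ≤ 5/4 := by
  have key : ∀ n : ℕ, ∑ j ∈ range n, (1/5:ℝ)^j = (5/4) * (1 - (1/5)^n) := by
    intro n
    induction n with
    | zero => simp
    | succ n ih => rw [Finset.sum_range_succ, ih, pow_succ]; ring
  rw [key]
  nlinarith [pow_nonneg (by norm_num : (0:ℝ) ≤ 1/5) n]

private lemma sum_ico_geom (n : ℕ) : ∑ m ∈ Finset.Ico 4 n, (1/5:ℝ)^m ≤ 1/500 := by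
  rcases le_or_gt 4 n with h | h
  · rw [Finset.sum_Ico_eq_sum_range]
    calc ∑ i ∈ range (n-4), (1/5:ℝ)^(4+i)
        = (1/5:ℝ)^4 * ∑ i ∈ range (n-4), (1/5:ℝ)^i := by
          rw [Finset.mul_sum]; exact Finset.sum_congr rfl (fun i _ => pow_add _ _ _)
      _ ≤ (1/5:ℝ)^4 * (5/4) := by
          have h2 := geom_partial (n-4)
          have h3 : (0:ℝ) ≤ (1/5:ℝ)^4 := by positivity
          nlinarith
      _ = 1/500 := by norm_num
  · rw [Finset.Ico_eq_empty (by omega)]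
    norm_num

private lemma sum_D_le (d1 d2 d3 d4 : ℝ) (h1 : 0 ≤ d1) (h2 : 0 ≤ d2) (h3 : 0 ≤ d3)
    (h4 : 0 ≤ d4) (n : ℕ) :
    ∑ m ∈ range n, (if m = 0 then d1 else if m = 1 then d2 else if m = 2 then d3
      else if m = 3 then d4 else (1/5:ℝ)^m) ≤ d1 + d2 + d3 + d4 + 1/500 := by
  set D : ℕ → ℝ := fun m => (if m = 0 then d1 else if m = 1 then d2 else if m = 2 then d3
      else if m = 3 then d4 else (1/5:ℝ)^m) with hD
  have hD4 : ∑ m ∈ range 4, D m = d1 + d2 + d3 + d4 := by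
    simp [hD, Finset.sum_range_succ]
  rcases le_total n 4 with h | h
  · have hsub : ∑ m ∈ range n, D m ≤ ∑ m ∈ range 4, D m := by
      apply Finset.sum_le_sum_of_subset_of_nonneg (Finset.range_subset_range.2 h)
      intro i _ _
      simp only [hD]
      split_ifs <;> positivity
    rw [hD4] at hsub
    linarith
  · rw [← Finset.sum_range_add_sum_Ico _ h, hD4]
    have hIco : ∑ m ∈ Finset.Ico 4 n, D m = ∑ m ∈ Finset.Ico 4 n, (1/5:ℝ)^m := by
      apply Finset.sum_congr rfl
      intro m hm
      rw [Finset.mem_Ico] at hm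
      simp only [hD]
      rw [if_neg (by omega), if_neg (by omega), if_neg (by omega), if_neg (by omega)]
    rw [hIco]
    linarith [sum_ico_geom n]

private lemma caseI_bound (t U : ℕ → ℝ) (s : ℝ) (hs : 333/200 ≤ s)
    (hU0 : ∀ k, 0 < U k) (hUd : ∀ k, U (k+1) = 2 * U k)
    (ht : ∀ k, t k = Real.exp (-(U k + s^2/(4 * U k))))
    (hsum : Summable t) (hw : s ≤ U 0) :
    ∑' k, t k ≤ Real.exp (-s) * (13/4) := by
  have hs0 : (0:ℝ) < s := by linarith
  have hUk : ∀ k : ℕ, ((k:ℝ)+1) * s ≤ U k := by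
    intro k
    induction k with
    | zero => simpa using hw
    | succ k ih =>
      rw [hUd k]
      push_cast
      nlinarith [mul_nonneg (Nat.cast_nonneg k : (0:ℝ) ≤ k) hs0.le]
  have hb : ∀ k, t k ≤ Real.exp (-s) * (1/5)^k := by
    intro k
    rw [ht k]
    refine term_bound (c := (k:ℝ)) (hU0 k) hs (by positivity) ?_ (cert_geom_pow k)
    nlinarith [mul_le_mul_of_nonneg_right (hUk k) (hU0 k).le, sq_nonneg s]
  calc ∑' k, t k ≤ ∑' k : ℕ, Real.exp (-s) * (1/5)^k := by
        refine Summable.tsum_le_tsum hb hsum ?_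
        exact (summable_geometric_of_lt_one (by norm_num) (by norm_num)).mul_left _
    _ = Real.exp (-s) * (5/4) := by
        rw [tsum_mul_left, tsum_geometric_of_lt_one (by norm_num) (by norm_num)]
        norm_num
    _ ≤ Real.exp (-s) * (13/4) := by
        nlinarith [Real.exp_pos (-s)]

private lemma lower_tail {s w u : ℝ} (m : ℕ) (hs0 : 0 < s) (hw2 : w < s) (hu0 : 0 < u)
    (hu2 : u * 2^(m+1) = w) (hm : 4 ≤ m) : (m:ℝ)*s*u ≤ (u - s/2)^2 := by
  have hnat : 4*(m+1) ≤ 2^(m+1) := by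
    obtain ⟨m', rfl⟩ : ∃ m', m = m' + 4 := ⟨m - 4, by omega⟩
    have := Nat.lt_two_pow_self (n := m')
    calc 4*(m'+4+1) ≤ 32 * 2^m' := by omega
      _ = 2^(m'+4+1) := by rw [pow_add]; ring
  have hc1 : 4*((m:ℝ)+1) ≤ 2^(m+1) := by exact_mod_cast hnat
  have hc2 : ((m:ℝ)+1) * u ≤ s/4 := by
    nlinarith [mul_le_mul_of_nonneg_right hc1 hu0.le]
  nlinarith [sq_nonneg u, mul_le_mul_of_nonneg_left hc2 hs0.le]

set_option maxHeartbeats 2000000 in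
private lemma caseII_bound (t U : ℕ → ℝ) (s : ℝ) (k0 : ℕ) (hs : 333/200 ≤ s)
    (hU0 : ∀ k, 0 < U k) (hUd : ∀ k, U (k+1) = 2 * U k)
    (ht : ∀ k, t k = Real.exp (-(U k + s^2/(4 * U k))))
    (hsum : Summable t) (hw1 : s/2 ≤ U k0) (hw2 : U k0 < s) :
    ∑' k, t k ≤ Real.exp (-s) * (13/4) := by
  have hs0 : (0:ℝ) < s := by linarith
  set w := U k0 with hwdef
  have hw0 : 0 < w := hU0 k0
  have hup' : ∀ a j : ℕ, U (a + j) = 2^j * U a := by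
    intro a j
    induction j with
    | zero => simp
    | succ j ih => rw [← Nat.add_assoc, hUd, ih, pow_succ]; ring
  have hupj : ∀ j : ℕ, U (j + k0) = 2^j * w := by
    intro j; rw [Nat.add_comm j k0, hup' k0 j, hwdef]
  have hdownm : ∀ m : ℕ, m < k0 → U (k0 - 1 - m) * 2^(m+1) = w := by
    intro m hm
    have h1 : k0 - 1 - m + (m+1) = k0 := by omega
    have h2 := hup' (k0 - 1 - m) (m+1)
    rw [h1] at h2
    rw [hwdef, h2]; ring
  -- tail of upper part
  have hb_tail : ∀ j : ℕ, t (j + 4 + k0) ≤ Real.exp (-s) * ((1/5:ℝ)^(j+4)) := by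
    intro j
    have hUe : U (j + 4 + k0) = 2^(j+4) * w := hupj (j+4)
    rw [ht, hUe]
    have hu0 : (0:ℝ) < 2^(j+4) * w := by positivity
    have hcast : ((1/5:ℝ))^(j+4) = (1/5:ℝ)^((j+4:ℕ)) := by norm_num
    refine term_bound hu0 hs (by positivity : (0:ℝ) ≤ ((j+4:ℕ):ℝ)) ?_ ?_
    · -- ((j+4:ℕ):ℝ) * s * (2^(j+4)*w) ≤ (2^(j+4)*w - s/2)^2
      have hp1 : ((j:ℝ)+5) ≤ 2^(j+3) := by
        have h2 : j + 5 ≤ 2^(j+3) := by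
          have := Nat.lt_two_pow_self (n := j)
          calc j+5 ≤ 8*(j+1) := by omega
            _ ≤ 8*2^j := by omega
            _ = 2^(j+3) := by rw [pow_add]; ring
        exact_mod_cast h2
      have hpow : (2:ℝ)^(j+4) = 2 * 2^(j+3) := by rw [pow_succ]; ring
      have hu5 : ((j:ℝ)+5)*s ≤ 2^(j+4)*w := by
        calc ((j:ℝ)+5)*s ≤ 2^(j+3)*s := by nlinarith
          _ ≤ 2^(j+4)*w := by rw [hpow]; nlinarith [pow_pos (by norm_num : (0:ℝ) < 2) (j+3)]
      have hcast2 : ((j+4:ℕ):ℝ) = (j:ℝ)+4 := by push_cast; ring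
      rw [hcast2]
      nlinarith [mul_le_mul_of_nonneg_right hu5 hu0.le, sq_nonneg s]
    · exact_mod_cast cert_geom_pow (j+4)
  have hsum2 : Summable (fun i => t (i + k0)) := (summable_nat_add_iff k0).2 hsum
  have hsum3 : Summable (fun i => t (i + 4 + k0)) := by
    have := (summable_nat_add_iff 4).2 hsum2
    exact this
  have htail : ∑' j, t (j + 4 + k0) ≤ Real.exp (-s) * (1/500) := by
    have hsg : Summable (fun j : ℕ => Real.exp (-s) * ((1/5:ℝ)^(j+4))) := by
      apply Summable.mul_left
      exact (summable_nat_add_iff 4).2 (summable_geometric_of_lt_one (by norm_num) (by norm_num))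
    calc ∑' j, t (j + 4 + k0) ≤ ∑' j : ℕ, Real.exp (-s) * ((1/5:ℝ)^(j+4)) :=
          Summable.tsum_le_tsum hb_tail hsum3 hsg
      _ = Real.exp (-s) * (1/500) := by
          have hc : ∀ j:ℕ, Real.exp (-s) * ((1/5:ℝ)^(j+4)) = (Real.exp (-s) * (1/5)^4) * (1/5)^j := by
            intro j; rw [pow_add]; ring
          rw [tsum_congr hc, tsum_mul_left, tsum_geometric_of_lt_one (by norm_num) (by norm_num)]
          rw [mul_assoc]
          norm_num
  -- case split on w vs (7/10) s, produce all explicit bounds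
  obtain ⟨a0,a1,a2,a3,d1,d2,d3,d4, hd1,hd2,hd3,hd4, htot, h0,h1,h2,h3, hDlow⟩ :
      ∃ a0 a1 a2 a3 d1 d2 d3 d4 : ℝ, 0 ≤ d1 ∧ 0 ≤ d2 ∧ 0 ≤ d3 ∧ 0 ≤ d4 ∧
        (a0+a1+a2+a3) + (d1+d2+d3+d4+1/500) + 1/500 ≤ 13/4 ∧
        t (0 + k0) ≤ Real.exp (-s) * a0 ∧
        t (1 + k0) ≤ Real.exp (-s) * a1 ∧
        t (2 + k0) ≤ Real.exp (-s) * a2 ∧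
        t (3 + k0) ≤ Real.exp (-s) * a3 ∧
        (∀ m, m < k0 → t (k0 - 1 - m) ≤ Real.exp (-s) *
          (if m = 0 then d1 else if m = 1 then d2 else if m = 2 then d3
            else if m = 3 then d4 else (1/5:ℝ)^m)) := by
    have hU0e : U (0 + k0) = w := by rw [hupj]; norm_num
    have hU1e : U (1 + k0) = 2 * w := by rw [hupj]; norm_num
    have hU2e : U (2 + k0) = 4 * w := by rw [hupj]; norm_num
    have hU3e : U (3 + k0) = 8 * w := by rw [hupj]; norm_num
    have hlow_tail : ∀ m, m < k0 → 4 ≤ m → t (k0 - 1 - m) ≤ Real.exp (-s) * (1/5:ℝ)^m := by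
      intro m hm hm4
      rw [ht]
      exact term_bound (hU0 _) hs (by positivity)
        (lower_tail m hs0 hw2 (hU0 _) (hdownm m hm) hm4) (cert_geom_pow m)
    have hdowneq : ∀ m, m < k0 → U (k0 - 1 - m) = w / 2^(m+1) := by
      intro m hm
      have h2 : (0:ℝ) < 2^(m+1) := by positivity
      field_simp
      exact hdownm m hm
    have edown : ∀ m, m < k0 → U (k0 - 1 - m) * 2^(m+1) = w := hdownm
    rcases le_total w (7/10 * s) with hAB | hAB
    · -- case A
      refine ⟨1, 6605/10000, 1579/10000, 75/10000,
              8986/10000, 3690/10000, 425/10000, 61/100000,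
              by norm_num, by norm_num, by norm_num, by norm_num, by norm_num,
              ?_, ?_, ?_, ?_, ?_⟩
      · rw [ht, hU0e]
        exact term_bound (c := 0) hw0 hs le_rfl (by nlinarith [sq_nonneg (w - s/2)])
          (by norm_num)
      · rw [ht, hU1e]
        refine term_bound (c := 1/4) (by positivity) hs (by norm_num) ?_ certA1
        nlinarith [mul_nonneg (by linarith : (0:ℝ) ≤ 2*w - s) (by linarith : (0:ℝ) ≤ 2*w - s/4)]
      · rw [ht, hU2e]
        refine term_bound (c := 9/8) (by positivity) hs (by norm_num) ?_ certA2
        nlinarith [mul_nonneg (by linarith : (0:ℝ) ≤ 4*w - 2*s) (by linarith : (0:ℝ) ≤ 4*w - s/8)]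
      · rw [ht, hU3e]
        refine term_bound (c := 49/16) (by positivity) hs (by norm_num) ?_ certA3
        nlinarith [mul_nonneg (by linarith : (0:ℝ) ≤ 8*w - 4*s) (by linarith : (0:ℝ) ≤ 8*w - s/16)]
      · intro m hm
        rcases Nat.lt_or_ge m 4 with h4 | h4
        · interval_cases m
          · have e : U (k0 - 1 - 0) = w/2 := by
              have h2 := hdownm 0 hm; norm_num at h2 ⊢; linarith
            rw [ht, e]
            simp only [reduceIte]
            refine term_bound (c := 9/140) (by positivity) hs (by norm_num) ?_ certA4
            nlinarith [mul_nonneg (by nlinarith : (0:ℝ) ≤ 7*s/20 - w/2)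
              (by nlinarith : (0:ℝ) ≤ 5*s/7 - w/2)]
          · have e : U (k0 - 1 - 1) = w/4 := by
              have h2 := hdownm 1 hm; norm_num at h2 ⊢; linarith
            rw [ht, e]
            simp only [reduceIte]
            refine term_bound (c := 169/280) (by positivity) hs (by norm_num) ?_ certA5
            nlinarith [mul_nonneg (by nlinarith : (0:ℝ) ≤ 7*s/40 - w/4)
              (by nlinarith : (0:ℝ) ≤ 10*s/7 - w/4)]
          · have e : U (k0 - 1 - 2) = w/8 := by
              have h2 := hdownm 2 hm; norm_num at h2 ⊢; linarith
            rw [ht, e]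
            simp only [reduceIte]
            refine term_bound (c := 1089/560) (by positivity) hs (by norm_num) ?_ certA6
            nlinarith [mul_nonneg (by nlinarith : (0:ℝ) ≤ 7*s/80 - w/8)
              (by nlinarith : (0:ℝ) ≤ 20*s/7 - w/8)]
          · have e : U (k0 - 1 - 3) = w/16 := by
              have h2 := hdownm 3 hm; norm_num at h2 ⊢; linarith
            rw [ht, e]
            simp only [reduceIte]
            refine term_bound (c := 33/7) (by positivity) hs (by norm_num) ?_ certA7
            nlinarith [sq_nonneg w, mul_le_mul_of_nonneg_left hAB hs0.le]
        · rw [if_neg (by omega), if_neg (by omega), if_neg (by omega), if_neg (by omega)]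
          exact hlow_tail m hm h4
    · -- case B
      refine ⟨9094/10000, 3844/10000, 464/10000, 73/100000,
              1, 6605/10000, 1579/10000, 816/100000,
              by norm_num, by norm_num, by norm_num, by norm_num, by norm_num,
              ?_, ?_, ?_, ?_, ?_⟩
      · rw [ht, hU0e]
        refine term_bound (c := 2/35) hw0 hs (by norm_num) ?_ certB1
        nlinarith [mul_nonneg (by linarith : (0:ℝ) ≤ w - 7*s/10)
          (by nlinarith : (0:ℝ) ≤ w - 5*s/14)]
      · rw [ht, hU1e]
        refine term_bound (c := 81/140) (by positivity) hs (by norm_num) ?_ certB2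
        nlinarith [mul_nonneg (by linarith : (0:ℝ) ≤ 2*w - 7*s/5)
          (by nlinarith : (0:ℝ) ≤ 2*w - 5*s/28)]
      · rw [ht, hU2e]
        refine term_bound (c := 529/280) (by positivity) hs (by norm_num) ?_ certB3
        nlinarith [mul_nonneg (by linarith : (0:ℝ) ≤ 4*w - 14*s/5)
          (by nlinarith : (0:ℝ) ≤ 4*w - 5*s/56)]
      · rw [ht, hU3e]
        refine term_bound (c := 23/5) (by positivity) hs (by norm_num) ?_ certB4
        nlinarith [mul_nonneg (by linarith : (0:ℝ) ≤ 8*w - 28*s/5)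
          (by linarith : (0:ℝ) ≤ 8*w), sq_nonneg s]
      · intro m hm
        rcases Nat.lt_or_ge m 4 with h4 | h4
        · interval_cases m
          · have e : U (k0 - 1 - 0) = w/2 := by
              have h2 := hdownm 0 hm; norm_num at h2 ⊢; linarith
            rw [ht, e]
            simp only [reduceIte]
            exact term_bound (c := 0) (by positivity) hs le_rfl
              (by nlinarith [sq_nonneg (w/2 - s/2)]) (by norm_num)
          · have e : U (k0 - 1 - 1) = w/4 := by
              have h2 := hdownm 1 hm; norm_num at h2 ⊢; linarith
            rw [ht, e]
            simp only [reduceIte]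
            refine term_bound (c := 1/4) (by positivity) hs (by norm_num) ?_ certA1
            nlinarith [mul_nonneg (by nlinarith : (0:ℝ) ≤ s/4 - w/4)
              (by nlinarith : (0:ℝ) ≤ s - w/4)]
          · have e : U (k0 - 1 - 2) = w/8 := by
              have h2 := hdownm 2 hm; norm_num at h2 ⊢; linarith
            rw [ht, e]
            simp only [reduceIte]
            refine term_bound (c := 9/8) (by positivity) hs (by norm_num) ?_ certA2
            nlinarith [mul_nonneg (by nlinarith : (0:ℝ) ≤ s/8 - w/8)
              (by nlinarith : (0:ℝ) ≤ 2*s - w/8)]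
          · have e : U (k0 - 1 - 3) = w/16 := by
              have h2 := hdownm 3 hm; norm_num at h2 ⊢; linarith
            rw [ht, e]
            simp only [reduceIte]
            refine term_bound (c := 3) (by positivity) hs (by norm_num) ?_ certB5
            nlinarith [sq_nonneg (w/16), mul_le_mul_of_nonneg_left hw2.le hs0.le]
        · rw [if_neg (by omega), if_neg (by omega), if_neg (by omega), if_neg (by omega)]
          exact hlow_tail m hm h4
  -- assemble
  have hsplit1 := (Summable.sum_add_tsum_nat_add k0 hsum).symm
  have hsplit2 := (Summable.sum_add_tsum_nat_add 4 hsum2).symm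
  have hlowsum : ∑ i ∈ range k0, t i ≤ Real.exp (-s) * (d1+d2+d3+d4+1/500) := by
    rw [← Finset.sum_range_reflect]
    calc ∑ m ∈ range k0, t (k0 - 1 - m)
        ≤ ∑ m ∈ range k0, Real.exp (-s) *
            (if m = 0 then d1 else if m = 1 then d2 else if m = 2 then d3
              else if m = 3 then d4 else (1/5:ℝ)^m) := by
          apply Finset.sum_le_sum
          intro m hm
          exact hDlow m (Finset.mem_range.1 hm)
      _ = Real.exp (-s) * ∑ m ∈ range k0,
            (if m = 0 then d1 else if m = 1 then d2 else if m = 2 then d3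
              else if m = 3 then d4 else (1/5:ℝ)^m) := by rw [Finset.mul_sum]
      _ ≤ Real.exp (-s) * (d1+d2+d3+d4+1/500) := by
          have := sum_D_le d1 d2 d3 d4 hd1 hd2 hd3 hd4 k0
          nlinarith [Real.exp_pos (-s)]
  have hupsum : ∑ i ∈ range 4, t (i + k0) ≤ Real.exp (-s) * (a0+a1+a2+a3) := by
    rw [Finset.sum_range_succ, Finset.sum_range_succ, Finset.sum_range_succ,
      Finset.sum_range_succ, Finset.sum_range_zero]
    linarith
  calc ∑' k, t k = (∑ i ∈ range k0, t i) + ∑' i, t (i + k0) := hsplit1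
    _ = (∑ i ∈ range k0, t i) + ((∑ i ∈ range 4, t (i + k0)) + ∑' i, t (i + 4 + k0)) := by
        rw [hsplit2]
    _ ≤ Real.exp (-s) * (d1+d2+d3+d4+1/500) + (Real.exp (-s) * (a0+a1+a2+a3)
          + Real.exp (-s) * (1/500)) := by
        gcongr
    _ ≤ Real.exp (-s) * (13/4) := by
        nlinarith [Real.exp_pos (-s)]

set_option maxHeartbeats 1000000 in
/-- For `0 < x < 1/2` and `η ≥ 1`,
`∑_{k≥0} exp(2^k log x - (1+η)/2^{k+1}) ≤ (13/4) exp(-√(-2 (log x)(1+η)))`. -/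
theorem double_exponential_sum_bound (x η : ℝ) (hx0 : 0 < x) (hx : x < 1 / 2)
    (hη : 1 ≤ η) :
    (∑' k : ℕ, Real.exp (2 ^ k * Real.log x - (1 + η) / 2 ^ (k + 1))) ≤
      (13 / 4) * Real.exp (-Real.sqrt (-(2 * Real.log x * (1 + η)))) := by
  classical
  have hlx : Real.log x < -Real.log 2 := by
    have h1 : Real.log x < Real.log (1/2) := Real.log_lt_log hx0 hx
    rwa [one_div, Real.log_inv] at h1
  have hlog2 : (0.6931471803:ℝ) < Real.log 2 := Real.log_two_gt_d9
  set L : ℝ := -Real.log x with hLdef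
  have hL1 : (0.6931471803:ℝ) < L := by rw [hLdef]; linarith
  have hL0 : 0 < L := by linarith
  have hA2 : (2:ℝ) ≤ 1 + η := by linarith
  set s : ℝ := Real.sqrt (-(2 * Real.log x * (1 + η))) with hsdef
  have hargnn : (0:ℝ) ≤ -(2 * Real.log x * (1 + η)) := by nlinarith
  have hs2 : s^2 = 2 * L * (1+η) := by
    rw [hsdef, Real.sq_sqrt hargnn, hLdef]; ring
  have hsnn : 0 ≤ s := Real.sqrt_nonneg _
  have hs1 : (333/200:ℝ) ≤ s := by
    have hq : (333/200:ℝ)^2 ≤ s^2 := by rw [hs2]; nlinarith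
    nlinarith [hq, hsnn]
  set U : ℕ → ℝ := fun k => 2^k * L with hUdef
  have hU0 : ∀ k, 0 < U k := by
    intro k; simp only [hUdef]; positivity
  have hUd : ∀ k, U (k+1) = 2 * U k := by
    intro k; simp only [hUdef]; rw [pow_succ]; ring
  have ht : ∀ k : ℕ, Real.exp (2 ^ k * Real.log x - (1 + η) / 2 ^ (k + 1))
      = Real.exp (-(U k + s^2/(4 * U k))) := by
    intro k
    congr 1
    have hlx2 : Real.log x = -L := by rw [hLdef]; ring
    rw [hlx2, hs2]
    simp only [hUdef]
    have h1 : (2:ℝ)^(k+1) ≠ 0 := by positivity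
    have h2 : (2:ℝ)^k ≠ 0 := by positivity
    have h3 : L ≠ 0 := ne_of_gt hL0
    field_simp
    ring
  have hsum : Summable (fun k : ℕ => Real.exp (2 ^ k * Real.log x - (1 + η) / 2 ^ (k + 1))) := by
    have hgsum : Summable (fun k : ℕ => (Real.exp (-L))^k) := by
      apply summable_geometric_of_lt_one (Real.exp_nonneg _)
      have := Real.exp_lt_exp.2 (show -L < 0 by linarith)
      rwa [Real.exp_zero] at this
    apply Summable.of_nonneg_of_le (fun k => (Real.exp_pos _).le) _ hgsum
    intro k
    have hk2 : (k:ℝ) ≤ 2^k := by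
      exact_mod_cast (Nat.lt_two_pow_self (n := k)).le
    have h1 : (2:ℝ)^k * Real.log x - (1+η)/2^(k+1) ≤ (k:ℝ) * (-L) := by
      have hd : (0:ℝ) ≤ (1+η)/2^(k+1) := by positivity
      have hlx2 : Real.log x = -L := by rw [hLdef]; ring
      rw [hlx2]
      nlinarith
    calc Real.exp (2^k * Real.log x - (1+η)/2^(k+1)) ≤ Real.exp ((k:ℝ) * (-L)) :=
          Real.exp_le_exp.2 h1
      _ = (Real.exp (-L))^k := Real.exp_nat_mul (-L) k
  rw [show (13/4:ℝ) * Real.exp (-s) = Real.exp (-s) * (13/4) from mul_comm _ _]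
  rcases le_or_gt s L with hcase | hcase
  · refine caseI_bound _ U s hs1 hU0 hUd ht hsum ?_
    simp only [hUdef]
    rw [pow_zero, one_mul]
    exact hcase
  · obtain ⟨k, hk⟩ : ∃ k : ℕ, s/2 ≤ U k := by
      obtain ⟨n, hn⟩ := pow_unbounded_of_one_lt (s/(2*L)) (one_lt_two (α := ℝ))
      refine ⟨n, ?_⟩
      have h2 := (div_lt_iff₀ (by positivity : (0:ℝ) < 2*L)).1 hn
      simp only [hUdef]
      nlinarith
    have hex : ∃ k : ℕ, s/2 ≤ U k := ⟨k, hk⟩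
    set k0 := Nat.find hex with hk0
    have hw1 : s/2 ≤ U k0 := Nat.find_spec hex
    have hw2 : U k0 < s := by
      rcases Nat.eq_zero_or_pos k0 with h0 | h0
      · rw [h0]
        simp only [hUdef]
        rw [pow_zero, one_mul]
        exact hcase
      · have hmin := Nat.find_min hex (Nat.sub_lt h0 one_pos)
        push_neg at hmin
        have hud := hUd (k0 - 1)
        rw [Nat.sub_add_cancel h0] at hud
        rw [hud]
        rw [← hk0] at hmin
        linarith
    exact caseII_bound _ U s k0 hs1 hU0 hUd ht hsum hw1 hw2
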